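/- arXiv:0806.2952 — 4 statements merged into one kernel-verified Lean document; each statement's English description precedes it below -/
import Mathlib

section
/- Let F : ℝ → ℝ be C², F ≥ 0, F(-1) = F(1) = 0, and set f = F'. Suppose u : ℝ → ℝ is a bounded C² solution of u''(ξ) - (n-1)u'(ξ) - f(u(ξ)) = 0 on all of ℝ with n > 1, such that u(ξ) → -1 as ξ → -∞, u(ξ) → +1 as ξ → +∞, and u'(ξ) → 0 as ξ → ±∞. Then u' ≡ 0, a contradiction; hence no such solution exists. -/
open Filter

theorem no_heteroclinic_between_wells (n : ℝ) (hn : 1 < n)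
    (F : ℝ → ℝ) (hF : ContDiff ℝ 2 F) (hFpos : ∀ s, 0 ≤ F s)
    (hFm : F (-1) = 0) (hFp : F 1 = 0)
    (u : ℝ → ℝ) (hu : ContDiff ℝ 2 u)
    (hbd : ∃ M, ∀ ξ, |u ξ| ≤ M)
    (hode : ∀ ξ, deriv (deriv u) ξ - (n - 1) * deriv u ξ - deriv F (u ξ) = 0)
    (hlimm : Tendsto u atBot (nhds (-1)))
    (hlimp : Tendsto u atTop (nhds 1))
    (hdlimm : Tendsto (deriv u) atBot (nhds 0))
    (hdlimp : Tendsto (deriv u) atTop (nhds 0)) :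
    False := by
  have hu1 : Differentiable ℝ u := hu.differentiable two_ne_zero
  have hu2 : Differentiable ℝ (deriv u) := by
    have := (contDiff_succ_iff_deriv (n := 1)).mp (by exact_mod_cast hu)
    exact this.2.2.differentiable one_ne_zero
  have hF1 : Differentiable ℝ F := hF.differentiable two_ne_zero
  set E : ℝ → ℝ := fun ξ => (deriv u ξ) ^ 2 / 2 - F (u ξ) with hEdef
  have hE : ∀ ξ, HasDerivAt E ((n - 1) * (deriv u ξ) ^ 2) ξ := by
    intro ξ
    have h1 : HasDerivAt (fun ξ => (deriv u ξ) ^ 2 / 2)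
        (deriv u ξ * deriv (deriv u) ξ) ξ := by
      have := ((hu2 ξ).hasDerivAt.pow 2).div_const 2
      refine this.congr_deriv ?_
      ring
    have h2 : HasDerivAt (fun ξ => F (u ξ)) (deriv F (u ξ) * deriv u ξ) ξ :=
      (hF1 (u ξ)).hasDerivAt.comp ξ (hu1 ξ).hasDerivAt
    have h3 := h1.sub h2
    refine h3.congr_deriv ?_
    have h4 : deriv (deriv u) ξ = (n - 1) * deriv u ξ + deriv F (u ξ) := by
      have := hode ξ; linarith
    rw [h4]; ring
  have hEdiff : Differentiable ℝ E := fun ξ => (hE ξ).differentiableAt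
  have hmono : Monotone E := by
    apply monotone_of_deriv_nonneg hEdiff
    intro ξ
    rw [(hE ξ).deriv]
    have hn' : (0:ℝ) ≤ n - 1 := by linarith
    positivity
  have hEtop : Tendsto E atTop (nhds 0) := by
    have : Tendsto E atTop (nhds ((0 : ℝ) ^ 2 / 2 - F 1)) :=
      ((hdlimp.pow 2).div_const 2).sub ((hF.continuous.tendsto 1).comp hlimp)
    simpa [hFp] using this
  have hEbot : Tendsto E atBot (nhds 0) := by
    have : Tendsto E atBot (nhds ((0 : ℝ) ^ 2 / 2 - F (-1))) :=
      ((hdlimm.pow 2).div_const 2).sub ((hF.continuous.tendsto (-1)).comp hlimm)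
    simpa [hFm] using this
  have hE0 : ∀ ξ, E ξ = 0 := fun ξ =>
    le_antisymm (hmono.ge_of_tendsto hEtop ξ) (hmono.le_of_tendsto hEbot ξ)
  have hderiv0 : ∀ ξ, deriv u ξ = 0 := by
    intro ξ
    have hzero : HasDerivAt E 0 ξ := by
      have : E = fun _ => (0 : ℝ) := funext hE0
      rw [this]; exact hasDerivAt_const ξ 0
    have h5 := (hE ξ).unique hzero
    have h6 : deriv u ξ ^ 2 = 0 := by
      rcases mul_eq_zero.mp h5 with h | h
      · exfalso; linarith
      · exact h
    exact pow_eq_zero_iff (two_ne_zero) |>.mp h6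
  have hconst : ∀ x y, u x = u y := is_const_of_deriv_eq_zero hu1 hderiv0
  have h1 : Tendsto u atTop (nhds (u 0)) := by
    have : u = fun _ => u 0 := funext fun x => hconst x 0
    rw [this]; exact tendsto_const_nhds
  have h2 : Tendsto u atBot (nhds (u 0)) := by
    have : u = fun _ => u 0 := funext fun x => hconst x 0
    rw [this]; exact tendsto_const_nhds
  have e1 : u 0 = 1 := tendsto_nhds_unique h1 hlimp
  have e2 : u 0 = -1 := tendsto_nhds_unique h2 hlimm
  linarith
end

section
/- Let n > 1 and let f : ℝ → ℝ be continuous with f = F' for a C¹ function F with F(±1) = 0 and F(s) > 0 for s ∈ (-1,1). Suppose u : ℝ → ℝ is C² and solves u''(ξ) - (n-1)u'(ξ) - f(u(ξ)) = 0 on (-∞, T], with u(ξ) → -1, u'(ξ) → 0 as ξ → -∞, u'(ξ)² integrable on (-∞,T], and u'(T) = 0, u(T) ∈ (0,1). Then we obtain the identity -(n-1)∫_{-∞}^{T}(u')² dξ = F(u(T)) - F(-1) > 0, which is impossible; hence no such solution exists. -/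
open Filter

theorem no_orbit_hitting_axis (n : ℝ) (hn : 1 < n) (T : ℝ)
    (F : ℝ → ℝ) (hF : ContDiff ℝ 1 F) (hFpos : ∀ s, 0 ≤ F s)
    (hFm : F (-1) = 0) (hFp : F 1 = 0)
    (hFin : ∀ s ∈ Set.Ioo (-1 : ℝ) 1, 0 < F s)
    (u : ℝ → ℝ) (hu : ContDiff ℝ 2 u)
    (hode : ∀ ξ ≤ T, deriv (deriv u) ξ - (n - 1) * deriv u ξ - deriv F (u ξ) = 0)
    (hlimm : Tendsto u atBot (nhds (-1)))
    (hdlimm : Tendsto (deriv u) atBot (nhds 0))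
    (hint : MeasureTheory.IntegrableOn (fun ξ => (deriv u ξ) ^ 2) (Set.Iic T))
    (hdT : deriv u T = 0)
    (huT : u T ∈ Set.Ioo (0 : ℝ) 1) :
    False := by
  have hu1 : Differentiable ℝ u := hu.differentiable (by norm_num)
  have hdu : ContDiff ℝ 1 (deriv u) := by
    have h2 : ContDiff ℝ ((1:ℕ) + 1) u := by exact_mod_cast hu
    exact (contDiff_succ_iff_deriv.mp h2).2.2
  have hdu1 : Differentiable ℝ (deriv u) := hdu.differentiable (by norm_num)
  have hF1 : Differentiable ℝ F := hF.differentiable (by norm_num)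
  set E : ℝ → ℝ := fun ξ => (deriv u ξ) ^ 2 / 2 - F (u ξ) with hE
  have hEderiv : ∀ ξ, HasDerivAt E
      (deriv u ξ * deriv (deriv u) ξ - deriv F (u ξ) * deriv u ξ) ξ := by
    intro ξ
    have h1 : HasDerivAt (fun ξ => (deriv u ξ) ^ 2 / 2)
        (deriv u ξ * deriv (deriv u) ξ) ξ := by
      have : HasDerivAt (fun x => (deriv u x) ^ 2 / 2)
          ((2:ℕ) * deriv u ξ ^ (2 - 1) * deriv (deriv u) ξ / 2) ξ :=
        ((hdu1 ξ).hasDerivAt.pow 2).div_const 2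
      convert this using 1
      ring
    have h2 : HasDerivAt (fun ξ => F (u ξ)) (deriv F (u ξ) * deriv u ξ) ξ :=
      (hF1 (u ξ)).hasDerivAt.comp ξ (hu1 ξ).hasDerivAt
    exact h1.sub h2
  have hEdiff : Differentiable ℝ E := fun ξ => (hEderiv ξ).differentiableAt
  have hEd : ∀ ξ ≤ T, deriv E ξ = (n - 1) * (deriv u ξ) ^ 2 := by
    intro ξ hξ
    rw [(hEderiv ξ).deriv]
    have h := hode ξ hξ
    have : deriv (deriv u) ξ = (n - 1) * deriv u ξ + deriv F (u ξ) := by linarith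
    rw [this]; ring
  have hmono : MonotoneOn E (Set.Iic T) := by
    apply monotoneOn_of_deriv_nonneg (convex_Iic T) hEdiff.continuous.continuousOn
      (hEdiff.differentiableOn)
    intro x hx
    rw [interior_Iic] at hx
    rw [hEd x (le_of_lt hx)]
    have : (0:ℝ) ≤ n - 1 := by linarith
    positivity
  have hElim : Tendsto E atBot (nhds 0) := by
    have h1 : Tendsto (fun ξ => (deriv u ξ) ^ 2 / 2) atBot (nhds ((0:ℝ)^2 / 2)) :=
      (hdlimm.pow 2).div_const 2
    have h2 : Tendsto (fun ξ => F (u ξ)) atBot (nhds (F (-1))) :=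
      (hF.continuous.tendsto (-1)).comp hlimm
    have := h1.sub h2
    simpa [hFm] using this
  have hET : E T < 0 := by
    have hFuT : 0 < F (u T) := hFin (u T) ⟨by linarith [huT.1], huT.2⟩
    simp only [hE, hdT]
    norm_num
    exact hFuT
  have hev : ∀ᶠ ξ in atBot, E T < E ξ :=
    hElim.eventually (eventually_gt_nhds hET)
  have hev2 : ∀ᶠ ξ in atBot, ξ ≤ T := eventually_le_atBot T
  obtain ⟨ξ, h1, h2⟩ := (hev.and hev2).exists
  have := hmono (Set.mem_Iic.mpr h2) (Set.mem_Iic.mpr le_rfl) h2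
  linarith
end

section
/- Let n ≥ 2 and let f : ℝ → ℝ be continuous with f = F', F ∈ C¹, F ≥ 0, F(-1) = F(1) = 0. Suppose u : [0,∞) → ℝ is a C² solution of u''(r) + (n-1)·coth(r)·u'(r) = f(u(r)) for r > 0, with u'(0) = 0, u bounded, and u(r) → η as r → ∞ where η ∈ {-1, +1}, and u'(r) → 0 as r → ∞. Then u is constant, equal to η. -/
open Filter Real

theorem radial_solution_tending_to_well_is_constant (n : ℝ) (hn : 2 ≤ n)
    (F : ℝ → ℝ) (hF : ContDiff ℝ 1 F) (hFpos : ∀ s, 0 ≤ F s)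
    (hFm : F (-1) = 0) (hFp : F 1 = 0)
    (η : ℝ) (hη : η = 1 ∨ η = -1)
    (u : ℝ → ℝ) (hu : ContDiff ℝ 2 u)
    (hbd : ∃ M, ∀ r, |u r| ≤ M)
    (hode : ∀ r > 0,
      deriv (deriv u) r + (n - 1) * (Real.cosh r / Real.sinh r) * deriv u r
        = deriv F (u r))
    (hd0 : deriv u 0 = 0)
    (hlim : Tendsto u atTop (nhds η))
    (hdlim : Tendsto (deriv u) atTop (nhds 0)) :
    ∀ r ≥ 0, u r = η := by
  have hu1 : Differentiable ℝ u := hu.differentiable (by norm_num)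
  have hud : ContDiff ℝ 1 (deriv u) := by
    have h2 : ContDiff ℝ ((1:ℕ∞) + 1) u := by exact_mod_cast hu
    exact_mod_cast (contDiff_succ_iff_deriv.mp h2).2.2
  have hud1 : Differentiable ℝ (deriv u) := hud.differentiable (by norm_num)
  have hFd : Differentiable ℝ F := hF.differentiable (by norm_num)
  set E : ℝ → ℝ := fun r => (deriv u r) ^ 2 / 2 - F (u r) with hEdef
  have hEderiv : ∀ r, HasDerivAt E
      (deriv u r * deriv (deriv u) r - deriv F (u r) * deriv u r) r := by
    intro r
    have h1 : HasDerivAt (fun r => (deriv u r) ^ 2 / 2)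
        (deriv u r * deriv (deriv u) r) r := by
      have := (((hud1 r).hasDerivAt.mul (hud1 r).hasDerivAt)).div_const 2
      convert this using 1
      · rfl
      · rfl
      · ext x; simp only [Pi.mul_apply]; ring
      · ring
    have h2 : HasDerivAt (fun r => F (u r)) (deriv F (u r) * deriv u r) r :=
      (hFd (u r)).hasDerivAt.comp r (hu1 r).hasDerivAt
    exact h1.sub h2
  have hEdiff : Differentiable ℝ E := fun r => (hEderiv r).differentiableAt
  -- derivative expression for r > 0
  have hEexpr : ∀ r > 0, deriv E r
      = -((n - 1) * (Real.cosh r / Real.sinh r) * (deriv u r) ^ 2) := by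
    intro r hr
    have h := (hEderiv r).deriv
    have hode' := hode r hr
    have h2 : deriv (deriv u) r
        = deriv F (u r) - (n - 1) * (Real.cosh r / Real.sinh r) * deriv u r := by
      linarith
    rw [h, h2]; ring
  have hEnonpos : ∀ r ∈ interior (Set.Ici (0:ℝ)), deriv E r ≤ 0 := by
    intro r hr
    rw [interior_Ici] at hr
    rw [hEexpr r hr]
    have hs : 0 < Real.sinh r := Real.sinh_pos_iff.mpr hr
    have hc : 0 < Real.cosh r := Real.cosh_pos r
    have : 0 ≤ (n - 1) * (Real.cosh r / Real.sinh r) * (deriv u r) ^ 2 := by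
      apply mul_nonneg (mul_nonneg (by linarith) (le_of_lt (div_pos hc hs)))
      positivity
    linarith
  have hanti : AntitoneOn E (Set.Ici 0) :=
    antitoneOn_of_deriv_nonpos (convex_Ici 0) (hEdiff.continuous.continuousOn)
      (hEdiff.differentiableOn.mono interior_subset) hEnonpos
  -- E tends to 0 at infinity
  have hFη : F η = 0 := by rcases hη with h | h <;> rw [h] <;> assumption
  have hEtend : Tendsto E atTop (nhds 0) := by
    have h1 : Tendsto (fun r => (deriv u r) ^ 2 / 2) atTop (nhds 0) := by
      have := (hdlim.mul hdlim).div_const 2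
      simpa [pow_two] using this
    have h2 : Tendsto (fun r => F (u r)) atTop (nhds (F η)) :=
      (hF.continuous.tendsto η).comp hlim
    have := h1.sub h2
    simpa [hFη] using this
  -- E is nonnegative on [0, ∞)
  have hEnonneg : ∀ r ≥ (0:ℝ), 0 ≤ E r := by
    intro r hr
    refine le_of_tendsto hEtend ?_
    filter_upwards [eventually_ge_atTop r] with s hs
    exact hanti hr (le_trans hr hs) hs
  have hE0 : E 0 ≤ 0 := by
    simp only [hEdef, hd0]
    have := hFpos (u 0)
    norm_num
    linarith
  have hEzero : ∀ r ≥ (0:ℝ), E r = 0 := by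
    intro r hr
    have h1 : E r ≤ E 0 := hanti (Set.mem_Ici.mpr le_rfl) hr hr
    have h2 := hEnonneg r hr
    linarith
  -- deriv u vanishes on (0, ∞)
  have hdzero : ∀ r > (0:ℝ), deriv u r = 0 := by
    intro r hr
    have hconst : E =ᶠ[nhds r] fun _ => (0:ℝ) := by
      filter_upwards [Ioi_mem_nhds hr] with s hs
      exact hEzero s (le_of_lt hs)
    have h0 : HasDerivAt E 0 r :=
      (hasDerivAt_const r (0:ℝ)).congr_of_eventuallyEq hconst
    have huniq := (hEderiv r).unique h0
    have hE' : deriv E r = 0 := by rw [(hEderiv r).deriv, huniq]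
    rw [hEexpr r hr] at hE'
    have hs : 0 < Real.sinh r := Real.sinh_pos_iff.mpr hr
    have hc : 0 < Real.cosh r := Real.cosh_pos r
    have hpos : 0 < (n - 1) * (Real.cosh r / Real.sinh r) :=
      mul_pos (by linarith) (div_pos hc hs)
    have : (deriv u r) ^ 2 = 0 := by
      by_contra h
      have h2 : 0 < (deriv u r) ^ 2 := lt_of_le_of_ne (sq_nonneg _) (Ne.symm h)
      nlinarith
    exact pow_eq_zero_iff (by norm_num) |>.mp this
  -- u is constant on [0, ∞)
  have hconst : ∀ r ≥ (0:ℝ), u r = u 0 := by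
    intro r hr
    refine constant_of_has_deriv_right_zero (a := 0) (b := r)
      (hu1.continuous.continuousOn) ?_ r ⟨hr, le_rfl⟩
    intro x hx
    have hx0 : deriv u x = 0 := by
      rcases eq_or_lt_of_le hx.1 with h | h
      · rw [← h]; exact hd0
      · exact hdzero x h
    have := (hu1 x).hasDerivAt.hasDerivWithinAt (s := Set.Ici x)
    rwa [hx0] at this
  -- conclude via uniqueness of limits
  have hlim2 : Tendsto u atTop (nhds (u 0)) := by
    refine Tendsto.congr' ?_ tendsto_const_nhds
    filter_upwards [eventually_ge_atTop (0:ℝ)] with s hs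
    exact (hconst s hs).symm
  have : u 0 = η := tendsto_nhds_unique hlim2 hlim
  intro r hr
  rw [hconst r hr, this]
end

section
/- Let n ≥ 2 and λ ≤ (n-1)²/4 with λ > 0, and let α₋ be the smaller root of α² - (n-1)α + λ = 0. Suppose w : (0,∞) → ℝ is C², bounded, and satisfies the inequality x²w''(x) + (2-n)x w'(x) + λ w(x) ≤ 0 with w ≥ 0 near 0 and near ∞ in the sense that liminf_{x→0} w(x)/x^{α₋} ≥ 0 and liminf_{x→∞} w(x)/x^{α₋} ≥ 0 with w/x^{α₋} bounded. Then w ≥ 0 on (0,∞). -/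
open Filter

theorem parabolic_minimum_principle (n : ℝ) (hn : 2 ≤ n)
    (lam : ℝ) (hlam : 0 < lam) (hlam' : lam ≤ (n - 1) ^ 2 / 4)
    (a : ℝ) (hroot : a ^ 2 - (n - 1) * a + lam = 0) (hsmall : a ≤ (n - 1) / 2)
    (w : ℝ → ℝ) (hw : ContDiffOn ℝ 2 w (Set.Ioi 0))
    (hwb : ∃ M, ∀ x > 0, |w x| ≤ M)
    (hineq : ∀ x > 0,
      x ^ 2 * deriv (deriv w) x + (2 - n) * x * deriv w x + lam * w x ≤ 0)
    (hquot : ∃ M, ∀ x > 0, |w x / x ^ a| ≤ M)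
    (h0 : 0 ≤ Filter.liminf (fun x => w x / x ^ a) (nhdsWithin 0 (Set.Ioi 0)))
    (hinfty : 0 ≤ Filter.liminf (fun x => w x / x ^ a) atTop) :
    ∀ x > 0, 0 ≤ w x := by
  obtain ⟨M, hM⟩ := hquot
  set b : ℝ := a + 2 - n with hb
  set v : ℝ → ℝ := fun x => w x / x ^ a with hv
  set h : ℝ → ℝ := fun x => x * deriv w x - a * w x with hh
  set g : ℝ → ℝ := fun x => x ^ (b - 1) * h x with hg
  -- basic differentiability
  have hw1 : ContDiffOn ℝ 1 (deriv w) (Set.Ioi 0) := by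
    have := hw.deriv_of_isOpen isOpen_Ioi (m := 1) (by norm_num)
    exact this
  have hwd : ∀ x > 0, HasDerivAt w (deriv w x) x := fun x hx =>
    (((hw.contDiffAt (isOpen_Ioi.mem_nhds hx)).differentiableAt (by norm_num))).hasDerivAt
  have hwd2 : ∀ x > 0, HasDerivAt (deriv w) (deriv (deriv w) x) x := fun x hx =>
    (((hw1.contDiffAt (isOpen_Ioi.mem_nhds hx)).differentiableAt (by norm_num))).hasDerivAt
  -- derivative of g
  have hgd : ∀ x > 0, HasDerivAt g (x ^ (b - 2) *
      (x ^ 2 * deriv (deriv w) x + (2 - n) * x * deriv w x + lam * w x)) x := by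
    intro x hx
    have hd1 : HasDerivAt (fun y : ℝ => y ^ (b - 1)) ((b - 1) * x ^ (b - 2)) x := by
      have := Real.hasDerivAt_rpow_const (p := b - 1) (Or.inl hx.ne')
      convert this using 2
      ring
    have hd3 : HasDerivAt h (1 * deriv w x + x * deriv (deriv w) x - a * deriv w x) x :=
      ((hasDerivAt_id x).mul (hwd2 x hx)).sub ((hwd x hx).const_mul a)
    have hdg := hd1.mul hd3
    convert hdg using 1
    case e'_4 => rfl
    case e'_5 => rfl
    case e'_8 => rfl
    have e1 : x ^ (b - 1) = x ^ (b - 2) * x := by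
      rw [show b - 1 = b - 2 + 1 by ring, Real.rpow_add hx, Real.rpow_one]
    rw [e1, hb, hh]
    linear_combination (x ^ (b - 2) * w x) * hroot
  have hganti : AntitoneOn g (Set.Ioi 0) := by
    apply antitoneOn_of_deriv_nonpos (convex_Ioi 0)
    · exact fun x hx => ((hgd x hx).differentiableAt.continuousAt).continuousWithinAt
    · rw [interior_Ioi]
      exact fun x hx => (hgd x hx).differentiableAt.differentiableWithinAt
    · rw [interior_Ioi]
      intro x hx
      rw [(hgd x hx).deriv]
      exact mul_nonpos_of_nonneg_of_nonpos (Real.rpow_pos_of_pos hx _).le (hineq x hx)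
  -- derivative of v
  have hvd : ∀ x > 0, HasDerivAt v (x ^ (a - 1) * h x / (x ^ a) ^ 2) x := by
    intro x hx
    have hne : x ^ a ≠ 0 := (Real.rpow_pos_of_pos hx a).ne'
    have hd := (hwd x hx).div (Real.hasDerivAt_rpow_const (p := a) (Or.inl hx.ne')) hne
    convert hd using 1
    case e'_4 => rfl
    case e'_5 => rfl
    case e'_8 => rfl
    have e1 : x ^ a = x ^ (a - 1) * x := by
      rw [show a = a - 1 + 1 by ring]
      rw [Real.rpow_add hx, Real.rpow_one]
      ring_nf
    rw [hh]
    congr 1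
    rw [e1]; ring
  -- main claim for v
  have key : ∀ x > 0, 0 ≤ v x := by
    by_contra hcon
    push_neg at hcon
    obtain ⟨x₀, hx₀, hvx₀⟩ := hcon
    -- find x₁ > x₀ with v x₀ < v x₁
    have hbdd_top : IsBoundedUnder (· ≥ ·) atTop v := by
      refine ⟨-M, ?_⟩
      rw [eventually_map]
      exact (eventually_gt_atTop 0).mono fun x hx => (abs_le.mp (hM x hx)).1
    have hev : ∀ᶠ x in atTop, v x₀ < v x :=
      eventually_lt_of_lt_liminf (lt_of_lt_of_le hvx₀ hinfty) hbdd_top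
    obtain ⟨x₁, hx₁gt, hvlt⟩ := ((eventually_gt_atTop x₀).and hev).exists
    -- mean value theorem on [x₀, x₁]
    have hsub : Set.Icc x₀ x₁ ⊆ Set.Ioi 0 := fun y hy => lt_of_lt_of_le hx₀ hy.1
    obtain ⟨s, hs, hds⟩ := exists_deriv_eq_slope v hx₁gt
      (fun y hy => ((hvd y (hsub hy)).differentiableAt.continuousAt).continuousWithinAt)
      (fun y hy => ((hvd y (hsub (Set.Ioo_subset_Icc_self hy))).differentiableAt).differentiableWithinAt)
    have hs0 : (0:ℝ) < s := lt_trans hx₀ hs.1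
    have hslope : 0 < deriv v s := by
      rw [hds]
      exact div_pos (sub_pos.2 hvlt) (sub_pos.2 hx₁gt)
    have hhs : 0 < h s := by
      rw [(hvd s hs0).deriv] at hslope
      by_contra hle
      push_neg at hle
      have : s ^ (a - 1) * h s / (s ^ a) ^ 2 ≤ 0 :=
        div_nonpos_of_nonpos_of_nonneg
          (mul_nonpos_of_nonneg_of_nonpos (Real.rpow_pos_of_pos hs0 _).le hle)
          (sq_nonneg _)
      linarith
    have hgs : 0 < g s := mul_pos (Real.rpow_pos_of_pos hs0 _) hhs
    -- v is increasing on (0, x₀]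
    have hvpos : ∀ x ∈ Set.Ioo (0:ℝ) x₀, 0 < deriv v x := by
      intro x hx
      have hgx : 0 < g x := lt_of_lt_of_le hgs
        (hganti hx.1 (Set.mem_Ioi.2 hs0) (le_of_lt (lt_trans hx.2 hs.1)))
      have hhx : 0 < h x := by
        by_contra hle
        push_neg at hle
        have : g x ≤ 0 :=
          mul_nonpos_of_nonneg_of_nonpos (Real.rpow_pos_of_pos hx.1 _).le hle
        linarith
      rw [(hvd x hx.1).deriv]
      exact div_pos (mul_pos (Real.rpow_pos_of_pos hx.1 _) hhx)
        (pow_pos (Real.rpow_pos_of_pos hx.1 _) 2)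
    have hmono : StrictMonoOn v (Set.Ioc 0 x₀) := by
      apply strictMonoOn_of_deriv_pos (convex_Ioc 0 x₀)
      · exact fun y hy => ((hvd y hy.1).differentiableAt.continuousAt).continuousWithinAt
      · rw [interior_Ioc]; exact hvpos
    have hle : ∀ᶠ x in nhdsWithin 0 (Set.Ioi 0), v x ≤ v x₀ := by
      have h1 : ∀ᶠ x in nhdsWithin 0 (Set.Ioi 0), x < x₀ :=
        (eventually_lt_nhds hx₀).filter_mono nhdsWithin_le_nhds
      filter_upwards [h1, eventually_mem_nhdsWithin] with x hxlt hxmem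
      exact (hmono.monotoneOn ⟨hxmem, hxlt.le⟩ ⟨hx₀, le_refl _⟩ hxlt.le)
    have hbdd_0 : IsBoundedUnder (· ≥ ·) (nhdsWithin 0 (Set.Ioi 0)) v := by
      refine ⟨-M, ?_⟩
      rw [eventually_map]
      filter_upwards [eventually_mem_nhdsWithin] with x hx
      exact (abs_le.mp (hM x hx)).1
    have : liminf v (nhdsWithin 0 (Set.Ioi 0)) ≤ v x₀ :=
      liminf_le_of_frequently_le hle.frequently hbdd_0
    have h0' : (0:ℝ) ≤ liminf v (nhdsWithin 0 (Set.Ioi 0)) := h0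
    linarith
  intro x hx
  have hva := key x hx
  have hxa : (0:ℝ) < x ^ a := Real.rpow_pos_of_pos hx a
  have : w x = v x * x ^ a := by
    rw [hv]
    field_simp
  rw [this]
  exact mul_nonneg hva hxa.le
end
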